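/- Let β be the nondegenerate Hermitian form β(u₁,u₂) = -x₁x₂^q + y₁z₂^q + z₁y₂^q on V = F_{q^2}^3. If u₁, u₂ are nonzero isotropic vectors spanning distinct 1-dimensional subspaces, then for each μ ∈ F_{q^2}^* there are exactly q+1 vectors u₀ ∈ V satisfying β(u₀,u₀) = -μ^{q+1}, β(u₀,u₁) = 0, β(u₀,u₂) = 0, and any two such vectors differ by a scalar multiple. -/

import Mathlib

/-- The Hermitian form `β(u,v) = -x₁x₂^q + y₁z₂^q + z₁y₂^q` on `F_{q²}³`. -/
def herm {K : Type*} [Field K] (q : ℕ) (u v : Fin 3 → K) : K :=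
  -(u 0 * v 0 ^ q) + u 1 * v 2 ^ q + u 2 * v 1 ^ q

theorem perp_solutions
    (p e q : ℕ) (hp : p.Prime) (he : 0 < e) (hq : q = p ^ e) (hq2 : 2 < q)
    (K : Type) [Field K] [Fintype K] [DecidableEq K]
    (hcard : Fintype.card K = q ^ 2)
    (u₁ u₂ : Fin 3 → K) (h1 : u₁ ≠ 0) (h2 : u₂ ≠ 0)
    (hiso1 : herm q u₁ u₁ = 0) (hiso2 : herm q u₂ u₂ = 0)
    (hdist : Submodule.span K {u₁} ≠ Submodule.span K {u₂})
    (μ : K) (hμ : μ ≠ 0) :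
    (Finset.univ.filter (fun u₀ : Fin 3 → K =>
        herm q u₀ u₀ = -(μ ^ (q + 1)) ∧ herm q u₀ u₁ = 0 ∧ herm q u₀ u₂ = 0)).card
      = q + 1
    ∧ ∀ u₀ w₀ : Fin 3 → K,
        herm q u₀ u₀ = -(μ ^ (q + 1)) → herm q u₀ u₁ = 0 → herm q u₀ u₂ = 0 →
        herm q w₀ w₀ = -(μ ^ (q + 1)) → herm q w₀ u₁ = 0 → herm q w₀ u₂ = 0 →
        ∃ c : K, w₀ = c • u₀ := by
  have hq0 : q ≠ 0 := by omega
  -- characteristic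
  haveI hcharp : CharP K p := by
    haveI := ringChar.charP K
    obtain ⟨n, hrp, hcn⟩ := FiniteField.card K (ringChar K)
    have hdvd : ringChar K ∣ p ^ (2 * e) := by
      have h' : p ^ (2 * e) = Fintype.card K := by
        rw [hcard, hq, ← pow_mul, mul_comm]
      rw [h', hcn]
      exact dvd_pow_self _ n.pos.ne'
    have heq : ringChar K = p :=
      (Nat.prime_dvd_prime_iff_eq hrp hp).mp (hrp.dvd_of_dvd_pow hdvd)
    exact heq ▸ ringChar.charP K

  haveI : ExpChar K p := ExpChar.prime hp
  -- Frobenius-type lemmas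
  have hpq : ∀ x y : K, (x + y) ^ q = x ^ q + y ^ q := by
    intro x y; rw [hq]; exact add_pow_expChar_pow x y p e
  have hneg : ∀ x : K, (-x) ^ q = -(x ^ q) := by
    intro x
    have h := hpq x (-x)
    simp only [add_neg_cancel, zero_pow hq0] at h
    linear_combination -h
  have hsub : ∀ x y : K, (x - y) ^ q = x ^ q - y ^ q := by
    intro x y; rw [sub_eq_add_neg, hpq, hneg, sub_eq_add_neg]
  have hfix : ∀ x : K, (x ^ q) ^ q = x := by
    intro x
    rw [← pow_mul, show q * q = Fintype.card K by rw [hcard]; ring]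
    exact FiniteField.pow_card x
  have hσ0 : ∀ x : K, x ^ q = 0 → x = 0 := by
    intro x hx; exact pow_eq_zero_iff hq0 |>.mp hx
  have hconj : ∀ u v : Fin 3 → K, (herm q u v) ^ q = herm q v u := by
    intro u v
    simp only [herm, hpq, hneg, mul_pow, hfix]
    ring
  -- linearity
  have hL : ∀ (s t : K) (x y z : Fin 3 → K),
      herm q (fun i => s * x i + t * y i) z = s * herm q x z + t * herm q y z := by
    intro s t x y z; simp only [herm]; ring
  have hR : ∀ (s t : K) (x y z : Fin 3 → K),
      herm q z (fun i => s * x i + t * y i) = s ^ q * herm q z x + t ^ q * herm q z y := by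
    intro s t x y z; simp only [herm, hpq, mul_pow]; ring
  -- non-proportionality
  have hnprop12 : ∀ c : K, u₂ ≠ c • u₁ := by
    intro c h
    have hc : c ≠ 0 := by rintro rfl; simp at h; exact h2 h
    apply hdist
    rw [show ({u₁} : Set (Fin 3 → K)) = {u₁} from rfl]
    rw [h, Submodule.span_singleton_smul_eq (IsUnit.mk0 c hc) u₁]
  have hnprop21 : ∀ c : K, u₁ ≠ c • u₂ := by
    intro c h
    have hc : c ≠ 0 := by rintro rfl; simp at h; exact h1 h
    apply hdist
    rw [h, Submodule.span_singleton_smul_eq (IsUnit.mk0 c hc) u₂]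
  -- a totally isotropic "plane" is impossible: two orthogonal isotropic vectors
  -- with the first having vanishing 0-coordinate are proportional
  have key2 : ∀ v v' : Fin 3 → K, v 0 = 0 → v ≠ 0 →
      herm q v v = 0 → herm q v v' = 0 → herm q v' v = 0 → herm q v' v' = 0 →
      ∃ c : K, ∀ i, v' i = c * v i := by
    intro v v' hv0 hvne E1 E2 E3 E4
    have hyz : ¬(v 1 = 0 ∧ v 2 = 0) := by
      rintro ⟨ha, hb⟩
      apply hvne
      funext i
      fin_cases i <;> simp [hv0, ha, hb]
    simp only [herm, hv0, zero_pow hq0, mul_zero, zero_mul, neg_zero, zero_add] at E1 E2 E3 E4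
    -- E1 : v1 * v2^q + v2 * v1^q = 0   (after simplification)
    have hd : v 1 * v' 2 - v 2 * v' 1 = 0 := by
      have hdz : (v 1 * v' 2 - v 2 * v' 1) * (v 2) ^ q = 0 := by
        linear_combination v' 2 * E1 - v 2 * E3
      have hdy : (v 1 * v' 2 - v 2 * v' 1) * (v 1) ^ q = 0 := by
        linear_combination v 1 * E3 - v' 1 * E1
      rcases not_and_or.mp hyz with h | h
      · rcases mul_eq_zero.mp hdy with h' | h'
        · exact h'
        · exact absurd (hσ0 _ h') h
      · rcases mul_eq_zero.mp hdz with h' | h'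
        · exact h'
        · exact absurd (hσ0 _ h') h
    -- get the proportionality constant on coordinates 1,2
    obtain ⟨c, hc1, hc2⟩ : ∃ c : K, v' 1 = c * v 1 ∧ v' 2 = c * v 2 := by
      rcases not_and_or.mp hyz with h | h
      · refine ⟨v' 1 / v 1, by field_simp, ?_⟩
        field_simp
        linear_combination hd
      · refine ⟨v' 2 / v 2, ?_, by field_simp⟩
        field_simp
        linear_combination -hd
    rw [hc1, hc2] at E4
    simp only [mul_pow] at E4
    have h0 : v' 0 * (v' 0) ^ q = 0 := by
      linear_combination (-1 : K) * E4 + (c * c ^ q) * E1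
    have hv'0 : v' 0 = 0 := by
      rcases mul_eq_zero.mp h0 with h' | h'
      · exact h'
      · exact hσ0 _ h'
    refine ⟨c, fun i => ?_⟩
    fin_cases i <;> simp [hv0, hc1, hc2, hv'0]
  -- the two isotropic lines are not orthogonal
  have hb12 : herm q u₁ u₂ ≠ 0 := by
    intro b12
    have b21 : herm q u₂ u₁ = 0 := by rw [← hconj u₁ u₂, b12, zero_pow hq0]
    by_cases h10 : u₁ 0 = 0
    · obtain ⟨c, hc⟩ := key2 u₁ u₂ h10 h1 hiso1 b12 b21 hiso2
      exact hnprop12 c (funext fun i => hc i)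
    · set v : Fin 3 → K := fun i => -(u₂ 0) * u₁ i + u₁ 0 * u₂ i with hv
      have hv0 : v 0 = 0 := by simp only [hv]; ring
      have hvne : v ≠ 0 := by
        intro h
        apply hnprop12 (u₂ 0 / u₁ 0)
        funext i
        have hi := congrFun h i
        simp only [hv, Pi.zero_apply] at hi
        simp only [Pi.smul_apply, smul_eq_mul]
        field_simp
        linear_combination hi
      have hvu1 : herm q u₁ v = 0 := by
        rw [hv, hR]; rw [hiso1, b12]; ring
      have hu1v : herm q v u₁ = 0 := by
        rw [hv, hL]; rw [hiso1, b21]; ring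
      have hvv : herm q v v = 0 := by
        rw [hv, hL, hR, hR]; rw [hiso1, hiso2, b12, b21]; ring
      obtain ⟨c, hc⟩ := key2 v u₁ hv0 hvne hvv hu1v hvu1 hiso1
      by_cases hc0 : c = 0
      · apply h1
        funext i
        have := hc i
        rw [hc0] at this
        simpa using this
      · apply hnprop12 ((1 + c * u₂ 0) / (c * u₁ 0))
        funext i
        have hci := hc i
        simp only [hv] at hci
        simp only [Pi.smul_apply, smul_eq_mul]
        field_simp
        linear_combination (-1 : K) * hci
  -- the perp vector w
  set w : Fin 3 → K := ![(u₁ 2 * u₂ 1 - u₁ 1 * u₂ 2) ^ q, (u₁ 0 * u₂ 1 - u₁ 1 * u₂ 0) ^ q,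
      (u₁ 2 * u₂ 0 - u₁ 0 * u₂ 2) ^ q] with hwdef
  have hw0 : w 0 = (u₁ 2 * u₂ 1 - u₁ 1 * u₂ 2) ^ q := rfl
  have hw1 : w 1 = (u₁ 0 * u₂ 1 - u₁ 1 * u₂ 0) ^ q := rfl
  have hw2 : w 2 = (u₁ 2 * u₂ 0 - u₁ 0 * u₂ 2) ^ q := rfl
  have hWne : ∃ i, w i ≠ 0 := by
    by_contra hcon
    push_neg at hcon
    have e0 : u₁ 2 * u₂ 1 - u₁ 1 * u₂ 2 = 0 := hσ0 _ (hw0 ▸ hcon 0)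
    have e1 : u₁ 0 * u₂ 1 - u₁ 1 * u₂ 0 = 0 := hσ0 _ (hw1 ▸ hcon 1)
    have e2 : u₁ 2 * u₂ 0 - u₁ 0 * u₂ 2 = 0 := hσ0 _ (hw2 ▸ hcon 2)
    have h1' : u₁ 0 ≠ 0 ∨ u₁ 1 ≠ 0 ∨ u₁ 2 ≠ 0 := by
      by_contra h
      push_neg at h
      refine h1 (funext fun i => ?_)
      fin_cases i <;> simp [h.1, h.2.1, h.2.2]
    have key3 : ∀ j : Fin 3, u₁ j ≠ 0 → False := by
      intro j hj
      apply hnprop12 (u₂ j / u₁ j)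
      funext i
      simp only [Pi.smul_apply, smul_eq_mul]
      fin_cases i <;> fin_cases j <;>
        · try simp only [Fin.zero_eta, Fin.mk_one, Fin.reduceFinMk] at hj ⊢
          field_simp
          first
          | rfl
          | ring1
          | linear_combination e0
          | linear_combination -e0
          | linear_combination e1
          | linear_combination -e1
          | linear_combination e2
          | linear_combination -e2
          | skip
    rcases h1' with hj | hj | hj
    exacts [key3 0 hj, key3 1 hj, key3 2 hj]
  -- orthogonality of w
  have horth1 : herm q w u₁ = 0 := by
    have key : (-((u₁ 2 * u₂ 1 - u₁ 1 * u₂ 2) * u₁ 0) + (u₁ 0 * u₂ 1 - u₁ 1 * u₂ 0) * u₁ 2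
        + (u₁ 2 * u₂ 0 - u₁ 0 * u₂ 2) * u₁ 1) ^ q = herm q w u₁ := by
      simp only [herm, hw0, hw1, hw2, hpq, hneg, hsub, mul_pow]
      all_goals ring1
    rw [← key, show (-((u₁ 2 * u₂ 1 - u₁ 1 * u₂ 2) * u₁ 0) + (u₁ 0 * u₂ 1 - u₁ 1 * u₂ 0) * u₁ 2
        + (u₁ 2 * u₂ 0 - u₁ 0 * u₂ 2) * u₁ 1) = 0 from by ring, zero_pow hq0]
  have horth2 : herm q w u₂ = 0 := by
    have key : (-((u₁ 2 * u₂ 1 - u₁ 1 * u₂ 2) * u₂ 0) + (u₁ 0 * u₂ 1 - u₁ 1 * u₂ 0) * u₂ 2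
        + (u₁ 2 * u₂ 0 - u₁ 0 * u₂ 2) * u₂ 1) ^ q = herm q w u₂ := by
      simp only [herm, hw0, hw1, hw2, hpq, hneg, hsub, mul_pow]
      all_goals ring1
    rw [← key, show (-((u₁ 2 * u₂ 1 - u₁ 1 * u₂ 2) * u₂ 0) + (u₁ 0 * u₂ 1 - u₁ 1 * u₂ 0) * u₂ 2
        + (u₁ 2 * u₂ 0 - u₁ 0 * u₂ 2) * u₂ 1) = 0 from by ring, zero_pow hq0]
  -- value of the form on w
  have hww : herm q w w = -(herm q u₁ u₂ * herm q u₂ u₁) := by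
    have i1 := hiso1
    have i2 := hiso2
    simp only [herm] at i1 i2 ⊢
    simp only [hw0, hw1, hw2, hsub, mul_pow, hfix]
    linear_combination (-(u₂ 0 * u₂ 0 ^ q) + u₂ 1 * u₂ 2 ^ q + u₂ 2 * u₂ 1 ^ q) * i1
  -- every common perp vector is a multiple of w
  have hrep : ∀ u₀ : Fin 3 → K, herm q u₀ u₁ = 0 → herm q u₀ u₂ = 0 →
      ∃ c : K, u₀ = c • w := by
    intro u₀ E1 E2
    simp only [herm] at E1 E2
    have X0 : u₀ 1 * w 2 - u₀ 2 * w 1 = 0 := by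
      simp only [hw1, hw2, hsub, mul_pow]
      linear_combination (-(u₁ 0 ^ q)) * E2 + u₂ 0 ^ q * E1
    have X1 : u₀ 2 * w 0 - u₀ 0 * w 2 = 0 := by
      simp only [hw0, hw2, hsub, mul_pow]
      linear_combination u₁ 2 ^ q * E2 - u₂ 2 ^ q * E1
    have X2 : u₀ 0 * w 1 - u₀ 1 * w 0 = 0 := by
      simp only [hw0, hw1, hsub, mul_pow]
      linear_combination u₁ 1 ^ q * E2 - u₂ 1 ^ q * E1
    have hwcases : w 0 ≠ 0 ∨ w 1 ≠ 0 ∨ w 2 ≠ 0 := by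
      obtain ⟨i0, hi0⟩ := hWne
      fin_cases i0 <;> simp only [Fin.zero_eta, Fin.mk_one, Fin.reduceFinMk] at hi0 <;> tauto
    rcases hwcases with hi0 | hi0 | hi0
    · refine ⟨u₀ 0 / w 0, funext fun i => ?_⟩
      simp only [Pi.smul_apply, smul_eq_mul]
      fin_cases i <;> simp only [Fin.zero_eta, Fin.mk_one, Fin.reduceFinMk]
      · field_simp
      · field_simp
        linear_combination -X2
      · field_simp
        linear_combination X1
    · refine ⟨u₀ 1 / w 1, funext fun i => ?_⟩
      simp only [Pi.smul_apply, smul_eq_mul]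
      fin_cases i <;> simp only [Fin.zero_eta, Fin.mk_one, Fin.reduceFinMk]
      · field_simp
        linear_combination X2
      · field_simp
      · field_simp
        linear_combination -X0
    · refine ⟨u₀ 2 / w 2, funext fun i => ?_⟩
      simp only [Pi.smul_apply, smul_eq_mul]
      fin_cases i <;> simp only [Fin.zero_eta, Fin.mk_one, Fin.reduceFinMk]
      · field_simp
        linear_combination -X1
      · field_simp
        linear_combination X0
      · field_simp
  -- smul lemmas for the form
  have hsm : ∀ (d : K) (x y : Fin 3 → K), herm q (d • x) y = d * herm q x y := by
    intro d x y; simp only [herm, Pi.smul_apply, smul_eq_mul]; ring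
  have hsm2 : ∀ (d : K) (x : Fin 3 → K), herm q (d • x) (d • x) = d ^ (q + 1) * herm q x x := by
    intro d x; simp only [herm, Pi.smul_apply, smul_eq_mul, mul_pow]; ring
  have hww' : herm q w w = -(herm q u₁ u₂ ^ (q + 1)) := by
    rw [hww, ← hconj u₁ u₂]; ring
  set β := herm q u₁ u₂ with hβ
  have hβ0 : β ≠ 0 := hb12
  -- primitive (q+1)-st root of unity
  have hcardU : Fintype.card Kˣ = q ^ 2 - 1 := by rw [Fintype.card_units, hcard]
  obtain ⟨g, hg⟩ := IsCyclic.exists_generator (α := Kˣ)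
  have hog : orderOf g = q ^ 2 - 1 := by
    rw [orderOf_eq_card_of_forall_mem_zpowers hg, Nat.card_eq_fintype_card, hcardU]
  have harith : q ^ 2 - 1 = (q + 1) * (q - 1) := by
    have h1q : 1 ≤ q := by omega
    have h1q2 : 1 ≤ q ^ 2 := Nat.one_le_pow _ _ (by omega)
    zify [h1q, h1q2]; ring
  have hζo : orderOf (g ^ (q - 1)) = q + 1 := by
    rw [orderOf_pow, hog, harith, Nat.gcd_comm, Nat.gcd_eq_left ⟨q + 1, by ring⟩,
      Nat.mul_div_cancel _ (by omega)]
  have hζ : IsPrimitiveRoot ((g ^ (q - 1) : Kˣ) : K) (q + 1) := by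
    rw [← hζo]
    exact IsPrimitiveRoot.coe_units_iff.mpr (IsPrimitiveRoot.orderOf _)
  have hcardRoots : (Polynomial.nthRootsFinset (q + 1) (1 : K)).card = q + 1 :=
    hζ.card_nthRootsFinset
  set α := μ / β with hα
  have hα0 : α ≠ 0 := div_ne_zero hμ hβ0
  obtain ⟨i0, hi0⟩ := hWne
  have hwinj : ∀ c c' : K, c • w = c' • w → c = c' := by
    intro c c' h
    have := congrFun h i0
    simp only [Pi.smul_apply, smul_eq_mul] at this
    exact mul_right_cancel₀ hi0 this
  have himg : (Finset.univ.filter (fun u₀ : Fin 3 → K =>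
        herm q u₀ u₀ = -(μ ^ (q + 1)) ∧ herm q u₀ u₁ = 0 ∧ herm q u₀ u₂ = 0))
      = Finset.image (fun c : K => (α * c) • w) (Polynomial.nthRootsFinset (q + 1) (1 : K)) := by
    ext u₀
    simp only [Finset.mem_filter, Finset.mem_univ, true_and, Finset.mem_image]
    constructor
    · rintro ⟨hval, hE1, hE2⟩
      obtain ⟨d, rfl⟩ := hrep u₀ hE1 hE2
      rw [hsm2, hww'] at hval
      have hd : d ^ (q + 1) * β ^ (q + 1) = μ ^ (q + 1) := by linear_combination -hval
      refine ⟨d / α, ?_, ?_⟩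
      · rw [Polynomial.mem_nthRootsFinset (by omega : 0 < q + 1)]
        rw [hα]
        rw [div_pow, div_pow, div_div_eq_mul_div, div_eq_one_iff_eq (pow_ne_zero _ hμ)]
        linear_combination hd
      · have : α * (d / α) = d := by field_simp
        rw [this]
    · rintro ⟨c, hc, rfl⟩
      rw [Polynomial.mem_nthRootsFinset (by omega : 0 < q + 1)] at hc
      refine ⟨?_, by rw [hsm, horth1, mul_zero], by rw [hsm, horth2, mul_zero]⟩
      rw [hsm2, hww', mul_pow, hc, mul_one, hα, div_pow]
      field_simp
  constructor
  · rw [himg, Finset.card_image_of_injOn, hcardRoots]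
    intro c _ c' _ h
    exact mul_left_cancel₀ hα0 (hwinj _ _ h)
  · intro x0 y0 hx0 hx1 hx2 hy0 hy1 hy2
    obtain ⟨d, rfl⟩ := hrep x0 hx1 hx2
    obtain ⟨d', rfl⟩ := hrep y0 hy1 hy2
    have hd0 : d ≠ 0 := by
      rintro rfl
      rw [hsm2, hww'] at hx0
      apply hμ
      have : μ ^ (q + 1) = 0 := by
        have h0 : (0 : K) ^ (q + 1) = 0 := zero_pow (by omega)
        rw [h0] at hx0
        linear_combination hx0
      exact pow_eq_zero_iff (by omega : q + 1 ≠ 0) |>.mp this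
    exact ⟨d' / d, by rw [smul_smul, div_mul_cancel₀ _ hd0]⟩
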